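/- For the identity matrix I_n, define f(π) = |{k : π(k) = k}| (number of fixed points of π ∈ S_n, equal to Σ_k (I_n)_{k,π(k)}), viewed as a random variable on S_n with uniform measure. Then for every 0 < α < 1 and every τ ∈ (0,1], τ^{1-α}·(∫_0^τ f*(t) dt)^α ≤ 6·∫_0^τ (f*(t))^α dt, where f* is the decreasing rearrangement of f on [0,1]. -/

import Mathlib

open scoped Classical

/-- The decreasing rearrangement on `[0,1]` of the fixed-point-count function on
`S_n` with normalized counting measure. -/
noncomputable def fixStar (n : ℕ) (t : ℝ) : ℝ :=
  sInf {s : ℝ | 0 ≤ s ∧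
    ((Finset.univ.filter (fun π : Equiv.Perm (Fin n) =>
        s < ((Finset.univ.filter (fun k : Fin n => π k = k)).card : ℝ))).card : ℝ)
      / (Nat.factorial n : ℝ) ≤ t}

open Finset MeasureTheory

namespace Lemma6Aux


noncomputable def fixc {n : ℕ} (π : Equiv.Perm (Fin n)) : ℕ :=
  (Finset.univ.filter (fun k : Fin n => π k = k)).card

noncomputable def A (n j : ℕ) : ℕ :=
  (Finset.univ.filter (fun π : Equiv.Perm (Fin n) => j < fixc π)).card

lemma A_antitone (n : ℕ) : Antitone (A n) := by
  intro i j hij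
  apply Finset.card_le_card
  intro π hπ
  simp only [Finset.mem_filter, Finset.mem_univ, true_and] at *
  omega

lemma fixc_le (n : ℕ) (π : Equiv.Perm (Fin n)) : fixc π ≤ n := by
  simpa [fixc] using (Finset.card_filter_le Finset.univ (fun k : Fin n => π k = k))

lemma A_eq_zero (n j : ℕ) (h : n ≤ j) : A n j = 0 := by
  rw [A, Finset.card_eq_zero, Finset.filter_eq_empty_iff]
  intro π _
  have := fixc_le n π
  omega

lemma A_le_card (n j : ℕ) : A n j ≤ Nat.factorial n := by
  calc A n j ≤ (Finset.univ : Finset (Equiv.Perm (Fin n))).card := Finset.card_filter_le _ _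
  _ = Nat.factorial n := by simp [Finset.card_univ, Fintype.card_perm]

-- derangement bounds
lemma derange_bounds : ∀ m : ℕ,
    (2 * numDerangements (m+2) ≤ (m+2).factorial ∧ (m+2).factorial ≤ 3 * numDerangements (m+2)) ∧
    (2 * numDerangements (m+3) ≤ (m+3).factorial ∧ (m+3).factorial ≤ 3 * numDerangements (m+3)) := by
  intro m
  induction m with
  | zero => norm_num [numDerangements_add_two, Nat.factorial]
  | succ m ih =>
    obtain ⟨⟨h1, h2⟩, h3, h4⟩ := ih
    refine ⟨⟨h3, h4⟩, ?_, ?_⟩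
    · have : numDerangements (m+4) = (m+3) * (numDerangements (m+2) + numDerangements (m+3)) :=
        numDerangements_add_two (m+2)
      rw [this]
      have hf : (m+4).factorial = (m+4) * ((m+3) * (m+2).factorial) := by
        rw [show m+4 = (m+3)+1 by ring, show m + 3 = (m+2)+1 by ring,
          Nat.factorial_succ, Nat.factorial_succ]
      have hf3 : (m+3).factorial = (m+3) * (m+2).factorial := Nat.factorial_succ (m+2)
      nlinarith [Nat.factorial_pos (m+2)]
    · have : numDerangements (m+4) = (m+3) * (numDerangements (m+2) + numDerangements (m+3)) :=
        numDerangements_add_two (m+2)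
      rw [this]
      have hf : (m+4).factorial = (m+4) * ((m+3) * (m+2).factorial) := by
        rw [show m+4 = (m+3)+1 by ring, show m + 3 = (m+2)+1 by ring,
          Nat.factorial_succ, Nat.factorial_succ]
      have hf3 : (m+3).factorial = (m+3) * (m+2).factorial := Nat.factorial_succ (m+2)
      nlinarith [Nat.factorial_pos (m+2)]

lemma two_mul_numDerangements_le (n : ℕ) (hn : 1 ≤ n) :
    2 * numDerangements n ≤ n.factorial := by
  match n, hn with
  | 1, _ => simp [numDerangements_one]
  | (m+2), _ => exact (derange_bounds m).1.1

lemma factorial_le_three_mul (k : ℕ) (hk : k ≠ 1) :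
    k.factorial ≤ 3 * numDerangements k := by
  match k, hk with
  | 0, _ => simp [numDerangements_zero, Nat.factorial]
  | (m+2), _ => exact (derange_bounds m).1.2

lemma card_stab (n : ℕ) (S : Finset (Fin n)) :
    (Finset.univ.filter (fun π : Equiv.Perm (Fin n) => ∀ x ∈ S, π x = x)).card
      = (n - S.card).factorial := by
  rw [← Fintype.card_subtype]
  have e1 : {π : Equiv.Perm (Fin n) // ∀ x ∈ S, π x = x}
      ≃ Equiv.Perm {x : Fin n // x ∉ S} := by
    refine (Equiv.subtypeEquivRight ?_).trans
      (Equiv.Perm.subtypeEquivSubtypePerm (fun x : Fin n => x ∉ S)).symm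
    intro π
    constructor
    · intro h x hx
      exact h x (not_not.mp hx)
    · intro h x hx
      exact h x (not_not_intro hx)
  rw [Fintype.card_congr e1, Fintype.card_perm]
  congr 1
  rw [Fintype.card_subtype_compl, Fintype.card_fin, Fintype.card_coe]

lemma A_mul_factorial_le (n j : ℕ) : A n j * (j+1).factorial ≤ n.factorial := by
  by_cases hjn : j + 1 ≤ n
  · set T : Finset ((_ : Finset (Fin n)) × Equiv.Perm (Fin n)) :=
      (Finset.powersetCard (j+1) (Finset.univ : Finset (Fin n))).sigma
        (fun S => Finset.univ.filter (fun π : Equiv.Perm (Fin n) => ∀ x ∈ S, π x = x)) with hT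
    have hA : A n j ≤ T.card := by
      have hsel : ∀ π : Equiv.Perm (Fin n), ∃ S : Finset (Fin n),
          (j < fixc π → S ⊆ Finset.univ.filter (fun k => π k = k) ∧ S.card = j+1) := by
        intro π
        by_cases h : j < fixc π
        · obtain ⟨S, h1, h2⟩ :=
            Finset.exists_subset_card_eq (s := Finset.univ.filter (fun k => π k = k))
              (n := j+1) h
          exact ⟨S, fun _ => ⟨h1, h2⟩⟩
        · exact ⟨∅, fun h' => absurd h' h⟩
      choose g hg using hsel
      apply Finset.card_le_card_of_injOn (fun π => ⟨g π, π⟩)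
      · intro π hπ
        simp only [A, Finset.mem_coe, Finset.mem_filter, Finset.mem_univ, true_and] at hπ
        obtain ⟨h1, h2⟩ := hg π hπ
        simp only [hT, Finset.mem_coe, Finset.mem_sigma, Finset.mem_powersetCard]
        refine ⟨⟨Finset.subset_univ _, h2⟩, ?_⟩
        simp only [Finset.mem_filter, Finset.mem_univ, true_and]
        intro x hx
        exact (Finset.mem_filter.mp (h1 hx)).2
      · intro π _ π' _ h
        exact congrArg Sigma.snd h
    have hTcard : T.card = n.choose (j+1) * (n - (j+1)).factorial := by
      rw [hT, Finset.card_sigma]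
      rw [Finset.sum_congr rfl (fun S hS => ?_), Finset.sum_const,
        Finset.card_powersetCard, Finset.card_univ, Fintype.card_fin, smul_eq_mul]
      rw [card_stab]
      congr 2
      exact (Finset.mem_powersetCard.mp hS).2
    have key := Nat.choose_mul_factorial_mul_factorial hjn
    calc A n j * (j+1).factorial ≤ T.card * (j+1).factorial := by
          exact Nat.mul_le_mul_right _ hA
      _ = n.choose (j+1) * (j+1).factorial * (n - (j+1)).factorial := by
          rw [hTcard]; ring
      _ = n.factorial := key
  · have : A n j = 0 := by
      rw [A, Finset.card_eq_zero, Finset.filter_eq_empty_iff]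
      intro π _
      have h1 : fixc π ≤ n := by
        simpa [fixc] using (Finset.card_filter_le Finset.univ (fun k : Fin n => π k = k))
      omega
    simp [this]

lemma fixset_subtypeCongr {n : ℕ} (S : Finset (Fin n)) (d : Equiv.Perm {x : Fin n // ¬ x ∈ S})
    (hd : ∀ x, d x ≠ x) :
    Finset.univ.filter
      (fun x => (Equiv.Perm.subtypeCongr (Equiv.refl {x : Fin n // x ∈ S}) d) x = x) = S := by
  ext x
  simp only [Finset.mem_filter, Finset.mem_univ, true_and]
  by_cases hx : x ∈ S
  · simp only [hx, iff_true]
    rw [Equiv.Perm.subtypeCongr.left_apply _ _ hx]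
    rfl
  · simp only [hx, iff_false]
    rw [Equiv.Perm.subtypeCongr.right_apply _ _ hx]
    intro hcon
    exact hd ⟨x, hx⟩ (Subtype.ext hcon)

lemma le_A (n j : ℕ) (hjn : j + 1 ≤ n) :
    n.choose (j+1) * numDerangements (n - (j+1)) ≤ A n j := by
  set T : Finset (Σ S : Finset (Fin n), Equiv.Perm {x : Fin n // ¬ x ∈ S}) :=
    (Finset.powersetCard (j+1) (Finset.univ : Finset (Fin n))).sigma
      (fun S => Finset.univ.filter (fun d : Equiv.Perm {x : Fin n // ¬ x ∈ S} =>
        ∀ x, d x ≠ x)) with hT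
  have hTcard : T.card = n.choose (j+1) * numDerangements (n - (j+1)) := by
    rw [hT, Finset.card_sigma]
    rw [Finset.sum_congr rfl (fun S hS => ?_), Finset.sum_const,
      Finset.card_powersetCard, Finset.card_univ, Fintype.card_fin, smul_eq_mul]
    have h1 : (Finset.univ.filter (fun d : Equiv.Perm {x : Fin n // ¬ x ∈ S} =>
        ∀ x, d x ≠ x)).card = Fintype.card (derangements {x : Fin n // ¬ x ∈ S}) := by
      rw [← Fintype.card_subtype]
      exact Fintype.card_congr (Equiv.subtypeEquivRight (fun d => Iff.rfl))
    rw [h1, card_derangements_eq_numDerangements]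
    congr 2
    rw [Fintype.card_subtype_compl, Fintype.card_fin, Fintype.card_coe,
      (Finset.mem_powersetCard.mp hS).2]
  rw [← hTcard]
  apply Finset.card_le_card_of_injOn
    (fun p => Equiv.Perm.subtypeCongr (Equiv.refl {x : Fin n // x ∈ p.1}) p.2)
  · rintro ⟨S, d⟩ hp
    simp only [hT, Finset.mem_coe, Finset.mem_sigma, Finset.mem_powersetCard, Finset.mem_filter,
      Finset.mem_univ, true_and] at hp
    obtain ⟨⟨-, hcard⟩, hd⟩ := hp
    simp only [A, Finset.mem_coe, Finset.mem_filter, Finset.mem_univ, true_and]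
    rw [fixc, fixset_subtypeCongr S d hd, hcard]
    omega
  · rintro ⟨S, d⟩ hp ⟨S', d'⟩ hp' heq
    rw [Finset.mem_coe] at hp hp'
    simp only [hT, Finset.mem_sigma, Finset.mem_powersetCard, Finset.mem_filter,
      Finset.mem_univ, true_and] at hp hp'
    obtain ⟨-, hd⟩ := hp
    obtain ⟨-, hd'⟩ := hp'
    simp only at heq
    have hSS : S = S' := by
      rw [← fixset_subtypeCongr S d hd, ← fixset_subtypeCongr S' d' hd', heq]
    subst hSS
    have hdd : d = d' := by
      apply Equiv.ext
      rintro ⟨x, hx⟩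
      have h1 := Equiv.Perm.subtypeCongr.right_apply (Equiv.refl {x : Fin n // x ∈ S}) d hx
      have h2 := Equiv.Perm.subtypeCongr.right_apply (Equiv.refl {x : Fin n // x ∈ S}) d' hx
      rw [heq] at h1
      exact Subtype.ext (by rw [← h1, h2])
    rw [hdd]

lemma one_le_A (n j : ℕ) (hj : j < n) : 1 ≤ A n j := by
  rw [Nat.one_le_iff_ne_zero, A, ← Nat.pos_iff_ne_zero, Finset.card_pos]
  refine ⟨1, ?_⟩
  simp only [Finset.mem_filter, Finset.mem_univ, true_and]
  have : fixc (1 : Equiv.Perm (Fin n)) = n := by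
    simp [fixc]
  omega

lemma n_fact_le_two_A0 (n : ℕ) (hn : 1 ≤ n) : n.factorial ≤ 2 * A n 0 := by
  have hsplit := Finset.card_filter_add_card_filter_not
    (s := (Finset.univ : Finset (Equiv.Perm (Fin n)))) (p := fun π => 0 < fixc π)
  have hder : (Finset.univ.filter (fun π : Equiv.Perm (Fin n) => ¬ 0 < fixc π)).card
      = numDerangements n := by
    have h1 : (Finset.univ.filter (fun π : Equiv.Perm (Fin n) => ¬ 0 < fixc π))
        = Finset.univ.filter (fun π : Equiv.Perm (Fin n) => ∀ x, π x ≠ x) := by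
      apply Finset.filter_congr
      intro π _
      simp only [Nat.pos_iff_ne_zero, not_not, fixc, Finset.card_eq_zero,
        Finset.filter_eq_empty_iff]
      simp
    have h2 : numDerangements n = Fintype.card (derangements (Fin n)) := by
      rw [card_derangements_eq_numDerangements (Fin n), Fintype.card_fin]
    rw [h1, ← Fintype.card_subtype, h2]
    apply Fintype.card_congr
    exact Equiv.subtypeEquivRight (fun d => Iff.rfl)
  have hcard : (Finset.univ : Finset (Equiv.Perm (Fin n))).card = n.factorial := by
    simp [Finset.card_univ, Fintype.card_perm]
  have h2 := two_mul_numDerangements_le n hn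
  have h3 : A n 0 + numDerangements n = n.factorial := by
    rw [← hcard, ← hsplit, hder]; rfl
  omega

lemma n_fact_le_three_A (n j : ℕ) (hj : j < n) :
    n.factorial ≤ 3 * ((j+2).factorial * A n j) := by
  by_cases hk : n ≤ j + 2
  · have h1 : n.factorial ≤ (j+2).factorial := Nat.factorial_le hk
    have h2 := one_le_A n j hj
    nlinarith [Nat.factorial_pos (j+2)]
  · push_neg at hk
    set k := n - (j+1) with hkdef
    have hjn : j + 1 ≤ n := by omega
    have e := Nat.choose_mul_factorial_mul_factorial hjn
    have h1 : k.factorial ≤ 3 * numDerangements k := factorial_le_three_mul k (by omega)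
    have h2 := le_A n j hjn
    have h3 : (j+1).factorial ≤ (j+2).factorial := Nat.factorial_le (by omega)
    calc n.factorial = n.choose (j+1) * (j+1).factorial * (n - (j+1)).factorial := e.symm
      _ ≤ n.choose (j+1) * (j+1).factorial * (3 * numDerangements k) := by
          exact Nat.mul_le_mul_left _ h1
      _ = 3 * ((j+1).factorial * (n.choose (j+1) * numDerangements k)) := by ring
      _ ≤ 3 * ((j+2).factorial * A n j) := by
          apply Nat.mul_le_mul_left
          exact Nat.mul_le_mul h3 h2

noncomputable def aa (n j : ℕ) : ℝ := (A n j : ℝ) / (n.factorial : ℝ)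

lemma aa_nonneg (n j : ℕ) : 0 ≤ aa n j := by unfold aa; positivity

lemma aa_antitone (n : ℕ) : Antitone (aa n) := by
  intro i j hij
  unfold aa
  gcongr
  exact_mod_cast A_antitone n hij

lemma aa_le_one (n j : ℕ) : aa n j ≤ 1 := by
  unfold aa
  rw [div_le_one (by exact_mod_cast Nat.factorial_pos n)]
  exact_mod_cast A_le_card n j

lemma aa_eq_zero (n j : ℕ) (h : n ≤ j) : aa n j = 0 := by
  simp [aa, A_eq_zero n j h]

lemma aa_ub (n j : ℕ) : aa n j ≤ 1 / (((j+1).factorial : ℕ) : ℝ) := by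
  unfold aa
  rw [div_le_div_iff₀ (by exact_mod_cast Nat.factorial_pos n)
    (by exact_mod_cast Nat.factorial_pos (j+1)), one_mul]
  exact_mod_cast A_mul_factorial_le n j

lemma aa_lb (n j : ℕ) (hj : j < n) :
    1 / (3 * (((j+2).factorial : ℕ) : ℝ)) ≤ aa n j := by
  unfold aa
  rw [div_le_div_iff₀ (by positivity) (by exact_mod_cast Nat.factorial_pos n), one_mul]
  have h : (n.factorial : ℝ) ≤ 3 * (((j+2).factorial : ℝ) * ((A n j : ℕ) : ℝ)) := by
    exact_mod_cast n_fact_le_three_A n j hj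
  calc (n.factorial : ℝ) ≤ 3 * (((j+2).factorial : ℝ) * ((A n j : ℕ) : ℝ)) := h
    _ = ((A n j : ℕ) : ℝ) * (3 * ((j+2).factorial : ℝ)) := by ring

lemma aa_half (n : ℕ) (hn : 1 ≤ n) : 1 / 2 ≤ aa n 0 := by
  unfold aa
  rw [div_le_div_iff₀ (by norm_num) (by exact_mod_cast Nat.factorial_pos n), one_mul]
  have h : (n.factorial : ℝ) ≤ 2 * A n 0 := by exact_mod_cast n_fact_le_two_A0 n hn
  linarith

lemma fact_lower (k i : ℕ) (hk : 1 ≤ k) (h : k ≤ i) :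
    k.factorial * 2^(i-k) ≤ i.factorial := by
  induction i with
  | zero => omega
  | succ i ih =>
    rcases Nat.lt_or_ge k (i+1) with hlt | hge
    · have hki : k ≤ i := by omega
      have h2 : i + 1 - k = (i - k) + 1 := by omega
      rw [h2, pow_succ, Nat.factorial_succ, ← mul_assoc]
      have h3 : k.factorial * 2 ^ (i - k) * 2 ≤ i.factorial * 2 :=
        Nat.mul_le_mul_right _ (ih hki)
      refine h3.trans ?_
      have h4 : 2 ≤ i + 1 := by omega
      calc i.factorial * 2 ≤ i.factorial * (i+1) := Nat.mul_le_mul_left _ h4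
        _ = (i+1) * i.factorial := by ring
    · have : k = i + 1 := by omega
      subst this
      simp

lemma sum_aa_tail (n m : ℕ) :
    ∑ j ∈ Finset.Ico (m+1) n, aa n j ≤ 2 / (((m+2).factorial : ℕ) : ℝ) := by
  have key : ∀ j, m + 1 ≤ j →
      aa n j ≤ (1 / (((m+2).factorial : ℕ) : ℝ)) * (1/2)^(j-(m+1)) := by
    intro j hj
    refine (aa_ub n j).trans ?_
    rw [one_div_pow, one_div_mul_one_div]
    apply one_div_le_one_div_of_le
    · positivity
    · have h1 := fact_lower (m+2) (j+1) (by omega) (by omega)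
      rw [show j + 1 - (m+2) = j - (m+1) by omega] at h1
      exact_mod_cast h1
  calc ∑ j ∈ Finset.Ico (m+1) n, aa n j
      ≤ ∑ j ∈ Finset.Ico (m+1) n, (1 / (((m+2).factorial : ℕ) : ℝ)) * (1/2)^(j-(m+1)) :=
        Finset.sum_le_sum (fun j hj => key j (Finset.mem_Ico.mp hj).1)
    _ = (1 / (((m+2).factorial : ℕ) : ℝ)) * ∑ t ∈ Finset.range (n-(m+1)), (1/2)^t := by
        rw [Finset.sum_Ico_eq_sum_range, ← Finset.mul_sum]
        congr 1
        apply Finset.sum_congr rfl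
        intro t _
        congr 1
        omega
    _ ≤ (1 / (((m+2).factorial : ℕ) : ℝ)) * 2 := by
        apply mul_le_mul_of_nonneg_left (sum_geometric_two_le _) (by positivity)
    _ = 2 / (((m+2).factorial : ℕ) : ℝ) := by ring

lemma fixStar_filter (n : ℕ) {t : ℝ} (ht : 0 < t) :
    ∃ m : ℕ, m ≤ n ∧ fixStar n t = (m : ℝ) ∧
      (Finset.range n).filter (fun j => t < aa n j) = Finset.range m := by
  have hex : ∃ j, aa n j ≤ t := ⟨n, by rw [aa_eq_zero n n le_rfl]; exact ht.le⟩
  set m := Nat.find hex with hmdef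
  have hm : aa n m ≤ t := Nat.find_spec hex
  have hmin : ∀ j, j < m → t < aa n j := fun j hj =>
    lt_of_not_ge (fun h => Nat.find_min hex hj h)
  have hmn : m ≤ n := Nat.find_min' hex (by rw [aa_eq_zero n n le_rfl]; exact ht.le)
  have hcard : ∀ s : ℝ, 0 ≤ s →
      ((Finset.univ.filter (fun π : Equiv.Perm (Fin n) =>
        s < ((Finset.univ.filter (fun k : Fin n => π k = k)).card : ℝ))).card) = A n ⌊s⌋₊ := by
    intro s hs
    unfold A
    congr 1
    ext π
    simp only [Finset.mem_filter, Finset.mem_univ, true_and]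
    exact (Nat.floor_lt hs).symm
  refine ⟨m, hmn, ?_, ?_⟩
  · have hset : {s : ℝ | 0 ≤ s ∧
        ((Finset.univ.filter (fun π : Equiv.Perm (Fin n) =>
          s < ((Finset.univ.filter (fun k : Fin n => π k = k)).card : ℝ))).card : ℝ)
        / (Nat.factorial n : ℝ) ≤ t} = Set.Ici (m : ℝ) := by
      ext s
      simp only [Set.mem_setOf_eq, Set.mem_Ici]
      constructor
      · rintro ⟨hs0, hs⟩
        rw [hcard s hs0] at hs
        have hs' : aa n ⌊s⌋₊ ≤ t := hs
        have h1 : m ≤ ⌊s⌋₊ := Nat.find_min' hex hs'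
        calc (m : ℝ) ≤ (⌊s⌋₊ : ℝ) := by exact_mod_cast h1
          _ ≤ s := Nat.floor_le hs0
      · intro hs
        have hs0 : 0 ≤ s := le_trans (by positivity) hs
        refine ⟨hs0, ?_⟩
        rw [hcard s hs0]
        have h1 : m ≤ ⌊s⌋₊ := Nat.le_floor hs
        exact le_trans (aa_antitone n h1) hm
    rw [fixStar, hset, csInf_Ici]
  · ext j
    simp only [Finset.mem_filter, Finset.mem_range]
    constructor
    · rintro ⟨hjn, hj⟩
      by_contra hc
      push_neg at hc
      exact absurd (le_trans (aa_antitone n hc) hm) (not_le.mpr hj)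
    · intro hj
      exact ⟨lt_of_lt_of_le hj hmn, hmin j hj⟩

lemma fixStar_eq (n : ℕ) {t : ℝ} (ht : 0 < t) :
    fixStar n t = ∑ j ∈ Finset.range n, (if t < aa n j then (1:ℝ) else 0) := by
  obtain ⟨m, hmn, hval, hfil⟩ := fixStar_filter n ht
  rw [hval, Finset.sum_boole, hfil, Finset.card_range]

lemma fixStar_rpow_eq (n : ℕ) {α : ℝ} (hα : 0 < α) {t : ℝ} (ht : 0 < t) :
    fixStar n t ^ α = ∑ j ∈ Finset.range n,
      ((((j:ℝ)+1) ^ α - (j:ℝ) ^ α) * (if t < aa n j then (1:ℝ) else 0)) := by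
  obtain ⟨m, hmn, hval, hfil⟩ := fixStar_filter n ht
  rw [hval]
  have h1 : ∀ j : ℕ, (((j:ℝ)+1) ^ α - (j:ℝ) ^ α) * (if t < aa n j then (1:ℝ) else 0)
      = (if t < aa n j then (((j:ℝ)+1) ^ α - (j:ℝ) ^ α) else 0) := by
    intro j
    split <;> simp
  simp_rw [h1]
  rw [← Finset.sum_filter, hfil]
  have h2 : ∀ j : ℕ, ((j:ℝ)+1) ^ α - (j:ℝ) ^ α
      = (fun i : ℕ => ((i:ℝ)) ^ α) (j+1) - (fun i : ℕ => ((i:ℝ)) ^ α) j := by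
    intro j; push_cast; ring_nf
  simp_rw [h2]
  rw [Finset.sum_range_sub (fun i : ℕ => ((i:ℝ)) ^ α)]
  simp [Real.zero_rpow (ne_of_gt hα)]

lemma ite_eq_indicator (a : ℝ) :
    (fun t : ℝ => if t < a then (1:ℝ) else 0) = Set.indicator (Set.Iio a) (fun _ => 1) := by
  ext t
  simp [Set.indicator_apply]

lemma intervalIntegrable_ite (τ a : ℝ) :
    IntervalIntegrable (fun t : ℝ => if t < a then (1:ℝ) else 0) volume 0 τ := by
  rw [intervalIntegrable_iff, ite_eq_indicator]
  apply MeasureTheory.Integrable.indicator _ measurableSet_Iio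
  have : volume (Set.uIoc 0 τ) < ⊤ := by
    rw [Set.uIoc, Real.volume_Ioc]
    exact ENNReal.ofReal_lt_top
  exact (MeasureTheory.integrableOn_const_iff (C := (1:ℝ))).mpr (Or.inr this)

lemma integral_ite_lt (τ a : ℝ) (hτ : 0 < τ) (ha : 0 ≤ a) :
    ∫ t in (0:ℝ)..τ, (if t < a then (1:ℝ) else 0) = min τ a := by
  rcases le_or_gt a τ with hle | hlt
  · have hne : ∀ᵐ (t : ℝ) ∂volume, t ≠ a := by
      rw [MeasureTheory.ae_iff]
      have : {t : ℝ | ¬ t ≠ a} = {a} := by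
        ext t; simp
      rw [this]
      exact Real.volume_singleton
    have hae : ∀ᵐ (t : ℝ) ∂volume, t ∈ Set.uIoc 0 τ →
        (if t < a then (1:ℝ) else 0) = Set.indicator {x : ℝ | x ≤ a} (fun _ => (1:ℝ)) t := by
      filter_upwards [hne] with t ht _
      simp only [Set.indicator_apply, Set.mem_setOf_eq]
      rcases lt_trichotomy t a with h1 | h1 | h1
      · simp [h1, le_of_lt h1]
      · exact absurd h1 ht
      · simp [not_lt.mpr h1.le, not_le.mpr h1]
    rw [intervalIntegral.integral_congr_ae hae,
      intervalIntegral.integral_indicator (Set.mem_Icc.mpr ⟨ha, hle⟩)]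
    simp [min_eq_right hle]
  · have heqon : Set.EqOn (fun t : ℝ => if t < a then (1:ℝ) else 0) (fun _ => (1:ℝ))
        (Set.uIcc 0 τ) := by
      intro t ht
      rw [Set.uIcc_of_le hτ.le] at ht
      have : t < a := lt_of_le_of_lt ht.2 hlt
      simp [this]
    rw [intervalIntegral.integral_congr heqon]
    simp [min_eq_left hlt.le]


lemma integral_fixStar (n : ℕ) (τ : ℝ) (hτ : 0 < τ) :
    ∫ t in (0:ℝ)..τ, fixStar n t = ∑ j ∈ Finset.range n, min τ (aa n j) := by
  have hcong : ∀ᵐ (t : ℝ) ∂volume, t ∈ Set.uIoc 0 τ →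
      fixStar n t = ∑ j ∈ Finset.range n, (if t < aa n j then (1:ℝ) else 0) := by
    apply Filter.Eventually.of_forall
    intro t ht
    rw [Set.uIoc_of_le hτ.le] at ht
    exact fixStar_eq n ht.1
  rw [intervalIntegral.integral_congr_ae hcong,
    intervalIntegral.integral_finset_sum (fun j _ => intervalIntegrable_ite τ (aa n j))]
  exact Finset.sum_congr rfl (fun j _ => integral_ite_lt τ (aa n j) hτ (aa_nonneg n j))

lemma integral_fixStar_rpow (n : ℕ) (τ α : ℝ) (hτ : 0 < τ) (hα : 0 < α) :
    ∫ t in (0:ℝ)..τ, (fixStar n t) ^ α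
      = ∑ j ∈ Finset.range n, ((((j:ℝ)+1) ^ α - (j:ℝ) ^ α) * min τ (aa n j)) := by
  have hcong : ∀ᵐ (t : ℝ) ∂volume, t ∈ Set.uIoc 0 τ →
      (fixStar n t) ^ α = ∑ j ∈ Finset.range n,
        ((((j:ℝ)+1) ^ α - (j:ℝ) ^ α) * (if t < aa n j then (1:ℝ) else 0)) := by
    apply Filter.Eventually.of_forall
    intro t ht
    rw [Set.uIoc_of_le hτ.le] at ht
    exact fixStar_rpow_eq n hα ht.1
  rw [intervalIntegral.integral_congr_ae hcong,
    intervalIntegral.integral_finset_sum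
      (fun j _ => (intervalIntegrable_ite τ (aa n j)).const_mul _)]
  refine Finset.sum_congr rfl (fun j _ => ?_)
  rw [intervalIntegral.integral_const_mul, integral_ite_lt τ (aa n j) hτ (aa_nonneg n j)]

lemma two_rpow_ge (α : ℝ) (hα0 : 0 ≤ α) (hα1 : α ≤ 1) : 2 * α ≤ (2:ℝ) ^ α := by
  have hb : (2:ℝ) ^ (1-α) ≤ 2 - α := by
    have := rpow_one_add_le_one_add_mul_self (s := (1:ℝ)) (by norm_num) (p := 1 - α)
      (by linarith) (by linarith)
    norm_num at this
    linarith
  have hmul : (2:ℝ) ^ α * (2:ℝ) ^ (1-α) = 2 := by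
    rw [← Real.rpow_add two_pos]
    norm_num
  have h3 : (0:ℝ) < (2:ℝ) ^ α := Real.rpow_pos_of_pos two_pos α
  nlinarith [mul_le_mul_of_nonneg_left hb h3.le, sq_nonneg (α - 1)]

lemma key_ineq (m : ℕ) (hm : 1 ≤ m) (α : ℝ) (hα0 : 0 < α) (hα1 : α < 1) :
    7 * α ≤ 5 * ((m:ℝ)) ^ α + 6 * (((m:ℝ)+1) ^ α - (m:ℝ) ^ α) := by
  have hm1 : (1:ℝ) ≤ (m:ℝ) := by exact_mod_cast hm
  have hw : (m:ℝ) ^ α ≤ ((m:ℝ)+1) ^ α :=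
    Real.rpow_le_rpow (by linarith) (by linarith) hα0.le
  have hm1α : (1:ℝ) ≤ (m:ℝ) ^ α := Real.one_le_rpow hm1 hα0.le
  rcases le_or_gt α (5/7) with h57 | h57
  · linarith
  · rcases eq_or_lt_of_le hm with heq | hgt
    · have : (m:ℝ) = 1 := by exact_mod_cast heq.symm
      rw [this]
      have h2 : 2 * α ≤ (2:ℝ) ^ α := two_rpow_ge α hα0.le hα1.le
      norm_num
      nlinarith
    · have hm2 : (2:ℝ) ≤ (m:ℝ) := by exact_mod_cast hgt
      have h2 : (2:ℝ) ^ α ≤ (m:ℝ) ^ α := Real.rpow_le_rpow (by norm_num) hm2 hα0.le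
      have h3 : 2 * α ≤ (2:ℝ) ^ α := two_rpow_ge α hα0.le hα1.le
      nlinarith

lemma tangent_bound (B c α : ℝ) (hB : 0 < B) (hc : 0 ≤ c) (hα0 : 0 < α) (hα1 : α < 1) :
    (B + 7*c) ^ α ≤ B ^ α + B ^ α * (α * (7*c) / B) := by
  have hs : (0:ℝ) ≤ 7*c/B := by positivity
  have h1 : (1 + 7*c/B) ^ α ≤ 1 + α * (7*c/B) :=
    rpow_one_add_le_one_add_mul_self (by linarith) hα0.le hα1.le
  have h2 : B + 7*c = B * (1 + 7*c/B) := by field_simp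
  rw [h2, Real.mul_rpow hB.le (by linarith)]
  have hBα : (0:ℝ) ≤ B ^ α := (Real.rpow_pos_of_pos hB α).le
  calc B ^ α * (1 + 7*c/B) ^ α ≤ B ^ α * (1 + α * (7*c/B)) :=
        mul_le_mul_of_nonneg_left h1 hBα
    _ = B ^ α + B ^ α * (α * (7*c) / B) := by ring


end Lemma6Aux

open Lemma6Aux

theorem lemma6 (n : ℕ) (hn : 1 ≤ n) (α τ : ℝ) (hα0 : 0 < α) (hα1 : α < 1)
    (hτ : τ ∈ Set.Ioc (0:ℝ) 1) :
    τ ^ (1 - α) * (∫ t in (0:ℝ)..τ, fixStar n t) ^ α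
      ≤ 6 * ∫ t in (0:ℝ)..τ, (fixStar n t) ^ α := by
  obtain ⟨hτ0, hτ1⟩ := hτ
  rw [integral_fixStar n τ hτ0, integral_fixStar_rpow n τ α hτ0 hα0]
  set w : ℕ → ℝ := fun j => ((j:ℝ)+1) ^ α - (j:ℝ) ^ α with hw
  set X : ℝ := ∑ j ∈ Finset.range n, min τ (aa n j) with hX
  set Y : ℝ := ∑ j ∈ Finset.range n, w j * min τ (aa n j) with hY
  -- basic positivity facts
  have hwnn : ∀ j : ℕ, 0 ≤ w j := by
    intro j
    have : ((j:ℝ)) ^ α ≤ ((j:ℝ)+1) ^ α :=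
      Real.rpow_le_rpow (by positivity) (by linarith) hα0.le
    simp only [hw]; linarith
  have hminnn : ∀ j : ℕ, 0 ≤ min τ (aa n j) := fun j => le_min hτ0.le (aa_nonneg n j)
  have hX0 : 0 ≤ X := Finset.sum_nonneg (fun j _ => hminnn j)
  have hY0 : 0 ≤ Y := Finset.sum_nonneg (fun j _ => mul_nonneg (hwnn j) (hminnn j))
  -- the level index m
  have hex : ∃ j, aa n j ≤ τ := ⟨n, by rw [aa_eq_zero n n le_rfl]; exact hτ0.le⟩
  obtain ⟨m, hmn, hm, hmin⟩ : ∃ m, m ≤ n ∧ aa n m ≤ τ ∧ ∀ j, j < m → τ < aa n j :=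
    ⟨Nat.find hex, Nat.find_min' hex (by rw [aa_eq_zero n n le_rfl]; exact hτ0.le),
      Nat.find_spec hex, fun j hj => lt_of_not_ge (fun h => Nat.find_min hex hj h)⟩
  -- telescoping sum of weights
  have hsumw : ∀ M : ℕ, ∑ j ∈ Finset.range M, w j = (M:ℝ) ^ α := by
    intro M
    have h2 : ∀ j : ℕ, w j
        = (fun i : ℕ => ((i:ℝ)) ^ α) (j+1) - (fun i : ℕ => ((i:ℝ)) ^ α) j := by
      intro j; simp only [hw]; push_cast; ring_nf
    simp_rw [h2]
    rw [Finset.sum_range_sub (fun i : ℕ => ((i:ℝ)) ^ α)]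
    simp [Real.zero_rpow (ne_of_gt hα0)]
  -- splitting the sums at m
  have hrange : Finset.range n = Finset.range m ∪ Finset.Ico m n := by
    simp only [Finset.range_eq_Ico]
    exact (Finset.Ico_union_Ico_eq_Ico (Nat.zero_le m) hmn).symm
  have hdisj : Disjoint (Finset.range m) (Finset.Ico m n) := by
    rw [Finset.range_eq_Ico]
    exact Finset.Ico_disjoint_Ico_consecutive 0 m n
  have hmin_lo : ∀ j, j < m → min τ (aa n j) = τ := fun j hj => min_eq_left (hmin j hj).le
  have hmin_hi : ∀ j, m ≤ j → min τ (aa n j) = aa n j := fun j hj =>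
    min_eq_right (le_trans (aa_antitone n hj) hm)
  have hXsplit : X = (m:ℝ) * τ + ∑ j ∈ Finset.Ico m n, aa n j := by
    rw [hX, hrange, Finset.sum_union hdisj]
    congr 1
    · rw [Finset.sum_congr rfl (fun j hj => hmin_lo j (Finset.mem_range.mp hj)),
        Finset.sum_const, Finset.card_range, nsmul_eq_mul]
    · exact Finset.sum_congr rfl (fun j hj => hmin_hi j (Finset.mem_Ico.mp hj).1)
  have hYsplit : Y = (m:ℝ) ^ α * τ + ∑ j ∈ Finset.Ico m n, w j * aa n j := by
    rw [hY, hrange, Finset.sum_union hdisj]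
    congr 1
    · rw [Finset.sum_congr rfl
        (fun j hj => by rw [hmin_lo j (Finset.mem_range.mp hj)]), ← Finset.sum_mul, hsumw]
    · exact Finset.sum_congr rfl
        (fun j hj => by rw [hmin_hi j (Finset.mem_Ico.mp hj).1])
  rcases eq_or_lt_of_le hmn with hmeq | hmlt
  · -- m = n : X = n τ, Y = n^α τ, equality up to factor 6
    subst hmeq
    rw [Finset.Ico_self, Finset.sum_empty] at hXsplit hYsplit
    have hm1R : (1:ℝ) ≤ (m:ℝ) := by exact_mod_cast hn
    have hmul1 : τ ^ (1-α) * ((m:ℝ)*τ) ^ α = (m:ℝ) ^ α * τ := by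
      rw [Real.mul_rpow (by positivity) hτ0.le]
      rw [show τ ^ (1-α) * ((m:ℝ) ^ α * τ ^ α) = (m:ℝ) ^ α * (τ ^ (1-α) * τ ^ α) by ring,
        ← Real.rpow_add hτ0]
      norm_num
    rw [hXsplit, hYsplit, add_zero, add_zero, hmul1]
    have : (0:ℝ) ≤ (m:ℝ) ^ α * τ := by positivity
    linarith
  · -- m < n
    have ham : aa n m ≤ τ := hm
    have htail : ∑ j ∈ Finset.Ico m n, aa n j ≤ 7 * aa n m := by
      rw [Finset.sum_eq_sum_Ico_succ_bot hmlt]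
      have h1 := sum_aa_tail n m
      have h2 := aa_lb n m hmlt
      have h3 : (0:ℝ) < (((m+2).factorial : ℕ) : ℝ) := by
        exact_mod_cast Nat.factorial_pos (m+2)
      have h4 : 2 / (((m+2).factorial : ℕ) : ℝ) ≤ 6 * aa n m := by
        rw [div_le_iff₀ h3] at *
        rw [div_le_iff₀ (by positivity)] at h2
        nlinarith
      linarith
    rcases Nat.eq_zero_or_pos m with hm0 | hm1
    · -- m = 0 : τ ≥ aa n 0 ≥ 1/2
      subst hm0
      have hhalf := aa_half n hn
      have hXle : X ≤ 2 := by
        rw [hXsplit]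
        push_cast
        have h1 := sum_aa_tail n 0
        have h2 : Finset.Ico 0 n = Finset.range n := by rw [Finset.range_eq_Ico]
        rw [Finset.sum_eq_sum_Ico_succ_bot (by omega : 0 < n)]
        have h3 : (((0+2).factorial : ℕ) : ℝ) = 2 := by norm_num [Nat.factorial]
        rw [h3] at h1
        have := aa_le_one n 0
        norm_num at h1 ⊢
        linarith
      have hLHS : τ ^ (1-α) * X ^ α ≤ 2 := by
        have h1 : τ ^ (1-α) ≤ 1 := Real.rpow_le_one hτ0.le hτ1 (by linarith)
        have h2 : X ^ α ≤ 2 ^ α := Real.rpow_le_rpow hX0 hXle hα0.le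
        have h3 : (2:ℝ) ^ α ≤ 2 := by
          calc (2:ℝ) ^ α ≤ (2:ℝ) ^ (1:ℝ) :=
              Real.rpow_le_rpow_of_exponent_le one_le_two hα1.le
            _ = 2 := Real.rpow_one 2
        have h4 : (0:ℝ) ≤ X ^ α := Real.rpow_nonneg hX0 α
        nlinarith [Real.rpow_nonneg hτ0.le (1-α)]
      have hYge : 1/2 ≤ Y := by
        have h0n : 0 ∈ Finset.range n := Finset.mem_range.mpr (by omega)
        have hterm : w 0 * min τ (aa n 0) = aa n 0 := by
          have hw0 : w 0 = 1 := by
            simp only [hw]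
            norm_num [Real.zero_rpow (ne_of_gt hα0)]
          rw [hw0, one_mul, min_eq_right hm]
        calc (1:ℝ)/2 ≤ aa n 0 := hhalf
          _ = w 0 * min τ (aa n 0) := hterm.symm
          _ ≤ Y := Finset.single_le_sum
              (fun j _ => mul_nonneg (hwnn j) (hminnn j)) h0n
      linarith
    · -- 1 ≤ m < n
      have hm1R : (1:ℝ) ≤ (m:ℝ) := by exact_mod_cast hm1
      have hXle : X ≤ (m:ℝ) * τ + 7 * aa n m := by rw [hXsplit]; linarith
      have hYge : (m:ℝ) ^ α * τ + w m * aa n m ≤ Y := by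
        rw [hYsplit]
        have : w m * aa n m ≤ ∑ j ∈ Finset.Ico m n, w j * aa n j := by
          apply Finset.single_le_sum (f := fun j => w j * aa n j)
            (fun j _ => mul_nonneg (hwnn j) (aa_nonneg n j))
          exact Finset.mem_Ico.mpr ⟨le_refl m, hmlt⟩
        linarith
      set c := aa n m with hc
      have hc0 : 0 ≤ c := aa_nonneg n m
      have hB : (0:ℝ) < (m:ℝ) * τ := by positivity
      have htan := tangent_bound ((m:ℝ)*τ) c α hB hc0 hα0 hα1
      have hXα : X ^ α ≤ ((m:ℝ)*τ) ^ α + ((m:ℝ)*τ) ^ α * (α * (7*c) / ((m:ℝ)*τ)) :=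
        le_trans (Real.rpow_le_rpow hX0 hXle hα0.le) htan
      have hmul1 : τ ^ (1-α) * ((m:ℝ)*τ) ^ α = (m:ℝ) ^ α * τ := by
        rw [Real.mul_rpow (by positivity) hτ0.le]
        rw [show τ ^ (1-α) * ((m:ℝ) ^ α * τ ^ α) = (m:ℝ) ^ α * (τ ^ (1-α) * τ ^ α) by ring,
          ← Real.rpow_add hτ0]
        norm_num
      have hmα1 : (m:ℝ) ^ α ≤ (m:ℝ) := by
        calc (m:ℝ) ^ α ≤ (m:ℝ) ^ (1:ℝ) := Real.rpow_le_rpow_of_exponent_le hm1R hα1.le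
          _ = (m:ℝ) := Real.rpow_one _
      have hterm2 : τ ^ (1-α) * (((m:ℝ)*τ) ^ α * (α * (7*c) / ((m:ℝ)*τ)))
          ≤ 7 * α * c := by
        have : τ ^ (1-α) * (((m:ℝ)*τ) ^ α * (α * (7*c) / ((m:ℝ)*τ)))
            = ((m:ℝ) ^ α * τ) * (α * (7*c)) / ((m:ℝ)*τ) := by
          rw [← hmul1]; ring
        rw [this]
        rw [div_le_iff₀ hB]
        have hmm : (m:ℝ) ^ α * (7 * α * c) ≤ (m:ℝ) * (7 * α * c) :=
          mul_le_mul_of_nonneg_right hmα1 (by positivity)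
        nlinarith [hτ0]
      have hLHS : τ ^ (1-α) * X ^ α ≤ (m:ℝ) ^ α * τ + 7 * α * c := by
        have h5 : τ ^ (1-α) * X ^ α
            ≤ τ ^ (1-α) * (((m:ℝ)*τ) ^ α + ((m:ℝ)*τ) ^ α * (α * (7*c) / ((m:ℝ)*τ))) :=
          mul_le_mul_of_nonneg_left hXα (Real.rpow_nonneg hτ0.le _)
        rw [mul_add] at h5
        rw [hmul1] at h5
        linarith
      have hkey := key_ineq m hm1 α hα0 hα1
      have hwm : w m = ((m:ℝ)+1) ^ α - (m:ℝ) ^ α := rfl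
      have hmα0 : (0:ℝ) ≤ (m:ℝ) ^ α := Real.rpow_nonneg (by positivity) α
      have hfinal : 7 * α * c ≤ 5 * (m:ℝ) ^ α * τ + 6 * (w m * c) := by
        have h6 : 7 * α * c ≤ (5 * (m:ℝ) ^ α + 6 * w m) * c := by
          apply mul_le_mul_of_nonneg_right _ hc0
          rw [hwm]; exact hkey
        have h7 : 5 * (m:ℝ) ^ α * c ≤ 5 * (m:ℝ) ^ α * τ := by
          apply mul_le_mul_of_nonneg_left (hm) (by positivity)
        nlinarith
      linarith
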